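/- The 3-prism graph (two triangles {0,3,4} and {1,2,5} joined by the edges 05, 14, 23) is movable, i.e., it has a proper flexible labeling. -/

import Mathlib

open SimpleGraph Real

/-- The Euclidean plane. -/
abbrev Plane : Type := EuclideanSpace ℝ (Fin 2)

variable {V : Type*}

/-- A placement of a graph in the plane: endpoints of edges do not coincide. -/
def IsPlacement (G : SimpleGraph V) (p : V → Plane) : Prop :=
  ∀ ⦃u v : V⦄, G.Adj u v → p u ≠ p v

/-- Two placements are equivalent as frameworks on `G` if corresponding
edge lengths agree. -/
def FrameworkEquiv (G : SimpleGraph V) (p q : V → Plane) : Prop :=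
  ∀ ⦃u v : V⦄, G.Adj u v → dist (p u) (p v) = dist (q u) (q v)

/-- Two placements are congruent if all pairwise distances agree. -/
def PCongruent (p q : V → Plane) : Prop :=
  ∀ u v : V, dist (p u) (p v) = dist (q u) (q v)

/-- A flex of the framework `(G, p)`: a continuous path of placements on `[0,1]`
starting at `p`, each equivalent to `(G, p)`. -/
def IsFlex (G : SimpleGraph V) (p : V → Plane) (f : ℝ → V → Plane) : Prop :=
  ContinuousOn f (Set.Icc 0 1) ∧ f 0 = p ∧
    ∀ t ∈ Set.Icc (0 : ℝ) 1, IsPlacement G (f t) ∧ FrameworkEquiv G p (f t)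

/-- A flex is trivial if every placement along it is congruent to the initial one. -/
def IsTrivialFlex (p : V → Plane) (f : ℝ → V → Plane) : Prop :=
  ∀ t ∈ Set.Icc (0 : ℝ) 1, PCongruent (f t) p

/-- The placement `p` induces the labeling `lam`. -/
def Induces (G : SimpleGraph V) (p : V → Plane) (lam : Sym2 V → ℝ) : Prop :=
  ∀ ⦃u v : V⦄, G.Adj u v → dist (p u) (p v) = lam s(u, v)

/-- A labeling (positive on the edges) is flexible if some framework inducing it
has a non-trivial flex. -/
def IsFlexibleLabeling (G : SimpleGraph V) (lam : Sym2 V → ℝ) : Prop :=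
  (∀ e ∈ G.edgeSet, 0 < lam e) ∧
    ∃ p : V → Plane, Induces G p lam ∧ ∃ f, IsFlex G p f ∧ ¬ IsTrivialFlex p f

/-- A labeling is a proper flexible labeling if some framework inducing it has a
non-trivial flex in which all but finitely many placements are injective. -/
def IsProperFlexibleLabeling (G : SimpleGraph V) (lam : Sym2 V → ℝ) : Prop :=
  (∀ e ∈ G.edgeSet, 0 < lam e) ∧
    ∃ p : V → Plane, Induces G p lam ∧ ∃ f, IsFlex G p f ∧ ¬ IsTrivialFlex p f ∧
      {t ∈ Set.Icc (0 : ℝ) 1 | ¬ Function.Injective (f t)}.Finite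

/-- A graph is movable if it has a proper flexible labeling. -/
def Movable (G : SimpleGraph V) : Prop :=
  ∃ lam : Sym2 V → ℝ, IsProperFlexibleLabeling G lam

/-- A NAC-coloring: a surjective 2-coloring (`true` = red, `false` = blue) of the
edges such that every cycle is either monochromatic or contains at least two
edges of each color. -/
def IsNACColoring (G : SimpleGraph V) (δ : Sym2 V → Bool) : Prop :=
  (∃ e ∈ G.edgeSet, δ e = true) ∧ (∃ e ∈ G.edgeSet, δ e = false) ∧
    ∀ ⦃v : V⦄ (c : G.Walk v v), c.IsCycle →
      (∀ e ∈ c.edges, δ e = true) ∨ (∀ e ∈ c.edges, δ e = false) ∨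
        (2 ≤ (c.edges.filter (fun e => δ e)).length ∧
          2 ≤ (c.edges.filter (fun e => !(δ e))).length)

/-- The 3-prism graph: triangles `{0,3,4}` and `{1,2,5}` joined by the edges
`05`, `14`, `23`. -/
def Prism : SimpleGraph (Fin 6) :=
  SimpleGraph.fromEdgeSet
    {s(0, 4), s(0, 3), s(3, 4), s(1, 2), s(1, 5), s(2, 5), s(0, 5), s(1, 4), s(2, 3)}


section PrismAux

def cxN : Fin 6 → ℕ := ![0,1,1,0,0,1]
def mmN : Fin 6 → ℕ := ![0,1,2,2,1,0]
noncomputable def cxP (v : Fin 6) : ℝ := (cxN v : ℝ)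
noncomputable def mmP (v : Fin 6) : ℝ := (mmN v : ℝ)

@[simp] lemma cxP_0 : cxP 0 = 0 := by norm_num [cxP, show cxN 0 = 0 from rfl]
@[simp] lemma cxP_1 : cxP 1 = 1 := by norm_num [cxP, show cxN 1 = 1 from rfl]
@[simp] lemma cxP_2 : cxP 2 = 1 := by norm_num [cxP, show cxN 2 = 1 from rfl]
@[simp] lemma cxP_3 : cxP 3 = 0 := by norm_num [cxP, show cxN 3 = 0 from rfl]
@[simp] lemma cxP_4 : cxP 4 = 0 := by norm_num [cxP, show cxN 4 = 0 from rfl]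
@[simp] lemma cxP_5 : cxP 5 = 1 := by norm_num [cxP, show cxN 5 = 1 from rfl]
@[simp] lemma mmP_0 : mmP 0 = 0 := by norm_num [mmP, show mmN 0 = 0 from rfl]
@[simp] lemma mmP_1 : mmP 1 = 1 := by norm_num [mmP, show mmN 1 = 1 from rfl]
@[simp] lemma mmP_2 : mmP 2 = 2 := by norm_num [mmP, show mmN 2 = 2 from rfl]
@[simp] lemma mmP_3 : mmP 3 = 2 := by norm_num [mmP, show mmN 3 = 2 from rfl]
@[simp] lemma mmP_4 : mmP 4 = 1 := by norm_num [mmP, show mmN 4 = 1 from rfl]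
@[simp] lemma mmP_5 : mmP 5 = 0 := by norm_num [mmP, show mmN 5 = 0 from rfl]

/-- The flex of the prism: the two "red" triangle classes are translated copies of a
rotating segment configuration (a NAC-coloring motion). -/
noncomputable def flexP (t : ℝ) (v : Fin 6) : Plane :=
  (EuclideanSpace.equiv (Fin 2) ℝ).symm
    ![cxP v - mmP v * Real.sin t, mmP v * Real.cos t]

lemma adj_cases' {u v : Fin 6} (h : Prism.Adj u v) :
    (u=0∧v=4 ∨ u=4∧v=0)∨(u=0∧v=3 ∨ u=3∧v=0)∨(u=3∧v=4 ∨ u=4∧v=3)∨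
    (u=1∧v=2 ∨ u=2∧v=1)∨(u=1∧v=5 ∨ u=5∧v=1)∨(u=2∧v=5 ∨ u=5∧v=2)∨
    (u=0∧v=5 ∨ u=5∧v=0)∨(u=1∧v=4 ∨ u=4∧v=1)∨(u=2∧v=3 ∨ u=3∧v=2) := by
  rw [Prism, fromEdgeSet_adj] at h
  obtain ⟨h, -⟩ := h
  simpa only [Set.mem_insert_iff, Set.mem_singleton_iff, Sym2.eq_iff] using h

lemma dist_flexP (t : ℝ) (u v : Fin 6) : dist (flexP t u) (flexP t v) =
    Real.sqrt ((cxP u - cxP v)^2 - 2*(cxP u - cxP v)*(mmP u - mmP v)*Real.sin t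
      + (mmP u - mmP v)^2) := by
  rw [EuclideanSpace.dist_eq]
  simp only [flexP, EuclideanSpace.equiv, Fin.sum_univ_two, Real.dist_eq, sq_abs]
  simp only [PiLp.continuousLinearEquiv_symm_apply, WithLp.equiv_symm_apply, PiLp.toLp_apply,
    Matrix.cons_val_zero, Matrix.cons_val_one, Matrix.head_cons]
  congr 1
  linear_combination (mmP u - mmP v)^2 * Real.sin_sq_add_cos_sq t

lemma equiv_flexP (t : ℝ) {u v : Fin 6} (h : Prism.Adj u v) :
    dist (flexP t u) (flexP t v) = dist (flexP 0 u) (flexP 0 v) := by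
  obtain (⟨rfl,rfl⟩|⟨rfl,rfl⟩)|(⟨rfl,rfl⟩|⟨rfl,rfl⟩)|(⟨rfl,rfl⟩|⟨rfl,rfl⟩)|
    (⟨rfl,rfl⟩|⟨rfl,rfl⟩)|(⟨rfl,rfl⟩|⟨rfl,rfl⟩)|(⟨rfl,rfl⟩|⟨rfl,rfl⟩)|
    (⟨rfl,rfl⟩|⟨rfl,rfl⟩)|(⟨rfl,rfl⟩|⟨rfl,rfl⟩)|(⟨rfl,rfl⟩|⟨rfl,rfl⟩) := adj_cases' h <;>
    rw [dist_flexP, dist_flexP] <;> norm_num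

lemma dist_flexP_pos {u v : Fin 6} (h : Prism.Adj u v) (t : ℝ) :
    0 < dist (flexP t u) (flexP t v) := by
  rw [equiv_flexP t h]
  obtain (⟨rfl,rfl⟩|⟨rfl,rfl⟩)|(⟨rfl,rfl⟩|⟨rfl,rfl⟩)|(⟨rfl,rfl⟩|⟨rfl,rfl⟩)|
    (⟨rfl,rfl⟩|⟨rfl,rfl⟩)|(⟨rfl,rfl⟩|⟨rfl,rfl⟩)|(⟨rfl,rfl⟩|⟨rfl,rfl⟩)|
    (⟨rfl,rfl⟩|⟨rfl,rfl⟩)|(⟨rfl,rfl⟩|⟨rfl,rfl⟩)|(⟨rfl,rfl⟩|⟨rfl,rfl⟩) := adj_cases' h <;>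
    rw [dist_flexP] <;> norm_num

lemma cos_pos_of_Icc {t : ℝ} (ht : t ∈ Set.Icc (0:ℝ) 1) : 0 < Real.cos t := by
  apply Real.cos_pos_of_mem_Ioo
  constructor
  · have := Real.pi_gt_three; linarith [ht.1]
  · have := Real.pi_gt_three; linarith [ht.2]

lemma inj_flexP {t : ℝ} (ht : t ∈ Set.Icc (0:ℝ) 1) : Function.Injective (flexP t) := by
  intro a b hab
  have hc : (0:ℝ) < Real.cos t := cos_pos_of_Icc ht
  have h0 : flexP t a 0 = flexP t b 0 := by rw [hab]
  have h1 : flexP t a 1 = flexP t b 1 := by rw [hab]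
  have h0' : cxP a - mmP a * Real.sin t = cxP b - mmP b * Real.sin t := h0
  have h1' : mmP a * Real.cos t = mmP b * Real.cos t := h1
  have hm : mmP a = mmP b := mul_right_cancel₀ (ne_of_gt hc) h1'
  have hcx : cxP a = cxP b := by rw [hm] at h0'; linarith
  have hmN : mmN a = mmN b := Nat.cast_injective hm
  have hcN : cxN a = cxN b := Nat.cast_injective hcx
  have key : ∀ a b : Fin 6, mmN a = mmN b → cxN a = cxN b → a = b := by decide
  exact key a b hmN hcN

lemma cont_flexP : Continuous flexP := by
  apply continuous_pi
  intro v
  apply Continuous.comp (EuclideanSpace.equiv (Fin 2) ℝ).symm.continuous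
  apply continuous_pi
  intro i
  fin_cases i <;> simp <;> fun_prop

end PrismAux

/-- The 3-prism graph is movable: it has a proper flexible labeling. -/
theorem prism_movable : Movable Prism := by
  refine ⟨Sym2.lift ⟨fun u v => dist (flexP 0 u) (flexP 0 v), fun u v => dist_comm _ _⟩,
    ?_, flexP 0, ?_, flexP, ⟨cont_flexP.continuousOn, rfl, ?_⟩, ?_, ?_⟩
  · intro e he
    induction e using Sym2.ind with
    | _ u v =>
      rw [Sym2.lift_mk]
      exact dist_flexP_pos ((SimpleGraph.mem_edgeSet Prism).mp he) 0
  · intro u v h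
    rw [Sym2.lift_mk]
  · intro t ht
    refine ⟨fun u v h heq => (h.ne) (inj_flexP ht heq), fun u v h => (equiv_flexP t h).symm⟩
  · intro H
    have h1 := H 1 ⟨zero_le_one, le_refl 1⟩ 0 1
    rw [dist_flexP, dist_flexP] at h1
    norm_num at h1
    have hs : 0 < Real.sin 1 :=
      Real.sin_pos_of_pos_of_lt_pi one_pos (by linarith [Real.pi_gt_three])
    have hlt : Real.sqrt (2 - 2 * Real.sin 1) < Real.sqrt 2 :=
      Real.sqrt_lt_sqrt (by nlinarith [Real.sin_le_one 1]) (by linarith)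
    exact absurd h1 (ne_of_lt (by
      rw [show (2:ℝ) - 2 * Real.sin 1 = 1 - 2 * Real.sin 1 + 1 by ring] at hlt; exact hlt))
  · have h : {t ∈ Set.Icc (0:ℝ) 1 | ¬ Function.Injective (flexP t)} = ∅ := by
      ext t
      simp only [Set.mem_setOf_eq, Set.mem_empty_iff_false, iff_false, not_and]
      exact fun ht hni => hni (inj_flexP ht)
    rw [h]
    exact Set.finite_empty
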